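/- If τ > 0 satisfies the CFL condition, then for each σ = 1, 2, 3 the matrix I + (τ/2)M_σ is nonsingular and all of its entries are nonnegative. -/

import Mathlib

open Matrix
open scoped Kronecker

noncomputable section

namespace Kawarada

/-- The spectral norm (largest singular value) of a real matrix:
the operator norm of the induced map between Euclidean spaces. -/
noncomputable def specNorm {m : Type*} [Fintype m] [DecidableEq m]
    (A : Matrix m m ℝ) : ℝ :=
  ‖LinearMap.toContinuousLinearMap (Matrix.toEuclideanLin A)‖

/-- The `N × N` tridiagonal matrix `T` built from mesh steps `h 0, …, h N`.
Lean row/column index `i : Fin N` corresponds to the paper's index `i + 1`. -/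
noncomputable def tridiag (N : ℕ) (h : ℕ → ℝ) : Matrix (Fin N) (Fin N) ℝ :=
  Matrix.of fun i p =>
    if (i : ℕ) = (p : ℕ) then -2 / (h i * h ((i : ℕ) + 1))
    else if (i : ℕ) = (p : ℕ) + 1 then 2 / (h i * (h i + h ((i : ℕ) + 1)))
    else if (p : ℕ) = (i : ℕ) + 1 then 2 / (h ((i : ℕ) + 1) * (h i + h ((i : ℕ) + 1)))
    else 0

/-- `φ_{i,j,k}` for the paper's indices `i,j,k ≥ 1`. -/
noncomputable def phi (a b c q : ℝ) (h1 h2 h3 : ℕ → ℝ) (i j k : ℕ) : ℝ :=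
  (a ^ 2 * (∑ ℓ ∈ Finset.range i, h1 ℓ) ^ 2 +
      b ^ 2 * (∑ ℓ ∈ Finset.range j, h2 ℓ) ^ 2 +
      c ^ 2 * (∑ ℓ ∈ Finset.range k, h3 ℓ) ^ 2) ^ (q / 2)

/-- Index type for the vectorization: `i` (the `Fin N1` component) varies fastest. -/
abbrev Idx (N1 N2 N3 : ℕ) := Fin N3 × Fin N2 × Fin N1

/-- `φ` as a function of the vectorized index. -/
noncomputable def phiVec (N1 N2 N3 : ℕ) (a b c q : ℝ) (h1 h2 h3 : ℕ → ℝ)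
    (p : Idx N1 N2 N3) : ℝ :=
  phi a b c q h1 h2 h3 ((p.2.2 : ℕ) + 1) ((p.2.1 : ℕ) + 1) ((p.1 : ℕ) + 1)

/-- The diagonal matrix `B` with entries `φ_{i,j,k}⁻¹`. -/
noncomputable def Bdiag (N1 N2 N3 : ℕ) (a b c q : ℝ) (h1 h2 h3 : ℕ → ℝ) :
    Matrix (Idx N1 N2 N3) (Idx N1 N2 N3) ℝ :=
  Matrix.diagonal fun p => (phiVec N1 N2 N3 a b c q h1 h2 h3 p)⁻¹

/-- The matrices `M1, M2, M3`. -/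
noncomputable def Mmat (N1 N2 N3 : ℕ) (a b c q : ℝ) (h1 h2 h3 : ℕ → ℝ) :
    Fin 3 → Matrix (Idx N1 N2 N3) (Idx N1 N2 N3) ℝ :=
  ![(a ^ 2)⁻¹ •
      (Bdiag N1 N2 N3 a b c q h1 h2 h3 *
        ((1 : Matrix (Fin N3) (Fin N3) ℝ) ⊗ₖ
          ((1 : Matrix (Fin N2) (Fin N2) ℝ) ⊗ₖ tridiag N1 h1))),
    (b ^ 2)⁻¹ •
      (Bdiag N1 N2 N3 a b c q h1 h2 h3 *
        ((1 : Matrix (Fin N3) (Fin N3) ℝ) ⊗ₖ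
          (tridiag N2 h2 ⊗ₖ (1 : Matrix (Fin N1) (Fin N1) ℝ)))),
    (c ^ 2)⁻¹ •
      (Bdiag N1 N2 N3 a b c q h1 h2 h3 *
        (tridiag N3 h3 ⊗ₖ
          ((1 : Matrix (Fin N2) (Fin N2) ℝ) ⊗ₖ (1 : Matrix (Fin N1) (Fin N1) ℝ))))]

/-- The minimum of the mesh steps `h σ j`, `j = 0, …, N`, in one direction. -/
noncomputable def dirMin (N : ℕ) (h : ℕ → ℝ) : ℝ :=
  (Finset.range (N + 1)).inf' Finset.nonempty_range_add_one h

/-- The maximum of the mesh steps in one direction. -/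
noncomputable def dirMax (N : ℕ) (h : ℕ → ℝ) : ℝ :=
  (Finset.range (N + 1)).sup' Finset.nonempty_range_add_one h

/-- `h = min{h_{σ,j}}`, the global minimal mesh step. -/
noncomputable def meshMin (N1 N2 N3 : ℕ) (h1 h2 h3 : ℕ → ℝ) : ℝ :=
  min (dirMin N1 h1) (min (dirMin N2 h2) (dirMin N3 h3))

/-- `H = max{h_{σ,j}}`, the global maximal mesh step. -/
noncomputable def meshMax (N1 N2 N3 : ℕ) (h1 h2 h3 : ℕ → ℝ) : ℝ :=
  max (dirMax N1 h1) (max (dirMax N2 h2) (dirMax N3 h3))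

/-- `β_min = (h²/2)(a² h_{1,0}² + b² h_{2,0}² + c² h_{3,0}²)^{q/2}`. -/
noncomputable def betaMin (N1 N2 N3 : ℕ) (a b c q : ℝ) (h1 h2 h3 : ℕ → ℝ) : ℝ :=
  meshMin N1 N2 N3 h1 h2 h3 ^ 2 / 2 *
    (a ^ 2 * h1 0 ^ 2 + b ^ 2 * h2 0 ^ 2 + c ^ 2 * h3 0 ^ 2) ^ (q / 2)

/-- The CFL condition `τ/β_min < min{a², b², c²}`. -/
def CFL (N1 N2 N3 : ℕ) (a b c q : ℝ) (h1 h2 h3 : ℕ → ℝ) (τ : ℝ) : Prop :=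
  τ / betaMin N1 N2 N3 a b c q h1 h2 h3 < min (a ^ 2) (min (b ^ 2) (c ^ 2))

/-- `φ_min = min φ_{i,j,k}` (for the grid-sizes `nσ + 2 ≥ 2`). -/
noncomputable def phiMin (n1 n2 n3 : ℕ) (a b c q : ℝ) (h1 h2 h3 : ℕ → ℝ) : ℝ :=
  Finset.univ.inf' Finset.univ_nonempty
    (phiVec (n1 + 2) (n2 + 2) (n3 + 2) a b c q h1 h2 h3)

/-- The nonlinear source term `g`, acting componentwise: `g(v)_p = f(v_p)/φ_p`. -/
noncomputable def gvec (N1 N2 N3 : ℕ) (a b c q : ℝ) (h1 h2 h3 : ℕ → ℝ) (f : ℝ → ℝ)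
    (v : Idx N1 N2 N3 → ℝ) : Idx N1 N2 N3 → ℝ :=
  fun p => f (v p) / phiVec N1 N2 N3 a b c q h1 h2 h3 p

/-- The LOD propagator
`Φ(τ) = ∏_{σ=1}^3 (I − (τ/2)M_σ)⁻¹ (I + (τ/2)M_σ)`. -/
noncomputable def Phi (N1 N2 N3 : ℕ) (a b c q : ℝ) (h1 h2 h3 : ℕ → ℝ) (τ : ℝ) :
    Matrix (Idx N1 N2 N3) (Idx N1 N2 N3) ℝ :=
  (1 - (τ / 2) • Mmat N1 N2 N3 a b c q h1 h2 h3 0)⁻¹ *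
    (1 + (τ / 2) • Mmat N1 N2 N3 a b c q h1 h2 h3 0) *
  ((1 - (τ / 2) • Mmat N1 N2 N3 a b c q h1 h2 h3 1)⁻¹ *
    (1 + (τ / 2) • Mmat N1 N2 N3 a b c q h1 h2 h3 1)) *
  ((1 - (τ / 2) • Mmat N1 N2 N3 a b c q h1 h2 h3 2)⁻¹ *
    (1 + (τ / 2) • Mmat N1 N2 N3 a b c q h1 h2 h3 2))

theorem isHermitian_symPart {m : Type*} [Fintype m] (A : Matrix m m ℝ) :
    (((2 : ℝ)⁻¹ • (A + Aᵀ))).IsHermitian := by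
  show _ᴴ = _
  ext i j
  simp [Matrix.conjTranspose_apply, Matrix.transpose_apply, Matrix.add_apply]
  ring

/-- The logarithmic norm associated with the spectral norm:
`μ(A) = λ_max((A + Aᵀ)/2)`. -/
noncomputable def logNorm {m : Type*} [Fintype m] [DecidableEq m]
    (A : Matrix m m ℝ) : ℝ :=
  ⨆ i, (isHermitian_symPart A).eigenvalues i

/-- The Euclidean (`ℓ²`) norm of a vector. -/
noncomputable def vecNorm {m : Type*} [Fintype m] (x : m → ℝ) : ℝ :=
  Real.sqrt (∑ i, x i ^ 2)



lemma aux_unit_nonneg {m : Type*} [Fintype m] [DecidableEq m] (A : Matrix m m ℝ)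
    (hoff : ∀ p r, p ≠ r → 0 ≤ A p r)
    (hsum : ∀ p, ∑ r, A p r ≤ 0)
    (hdiag : ∀ p, -(1/2 : ℝ) < A p p) :
    IsUnit (1 + A) ∧ ∀ p r, 0 ≤ (1 + A) p r := by
  constructor
  · rw [Matrix.isUnit_iff_isUnit_det, isUnit_iff_ne_zero]
    apply det_ne_zero_of_sum_row_lt_diag
    intro k
    have ha1 : ∑ j ∈ Finset.univ.erase k, ‖(1 + A) k j‖ = (∑ j, A k j) - A k k := by
      rw [← Finset.sum_erase_eq_sub (Finset.mem_univ k)]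
      apply Finset.sum_congr rfl
      intro j hj
      have hjk : j ≠ k := Finset.ne_of_mem_erase hj
      have he : (1 + A) k j = A k j := by
        simp [Matrix.add_apply, Matrix.one_apply_ne (Ne.symm hjk)]
      rw [he, Real.norm_eq_abs, abs_of_nonneg (hoff k j (Ne.symm hjk))]
    have ha2 : (1 + A) k k = 1 + A k k := by simp [Matrix.add_apply, Matrix.one_apply_eq]
    have ha3 : ‖(1 + A) k k‖ = 1 + A k k := by
      rw [ha2, Real.norm_eq_abs, abs_of_pos (by linarith [hdiag k])]
    rw [ha1, ha3]
    linarith [hsum k, hdiag k]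
  · intro p r
    by_cases hpr : p = r
    · subst hpr
      have he : (1 + A) p p = 1 + A p p := by simp [Matrix.add_apply, Matrix.one_apply_eq]
      rw [he]; linarith [hdiag p]
    · have he : (1 + A) p r = A p r := by simp [Matrix.add_apply, Matrix.one_apply_ne hpr]
      rw [he]; exact hoff p r hpr

lemma sum_ite_nat_le {N : ℕ} (k : ℕ) (v : ℝ) (hv : 0 ≤ v) :
    (∑ p : Fin N, if (p : ℕ) = k then v else 0) ≤ v := by
  rw [Fin.sum_univ_eq_sum_range (fun j => if j = k then v else 0) N, Finset.sum_ite_eq']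
  split_ifs <;> simp [hv]

lemma sum_ite_nat_eq {N : ℕ} (k : ℕ) (hk : k < N) (v : ℝ) :
    (∑ p : Fin N, if (p : ℕ) = k then v else 0) = v := by
  rw [Fin.sum_univ_eq_sum_range (fun j => if j = k then v else 0) N, Finset.sum_ite_eq']
  simp [hk]

lemma tridiag_diag (N : ℕ) (h : ℕ → ℝ) (i : Fin N) :
    tridiag N h i i = -2 / (h i * h ((i : ℕ) + 1)) := by simp [tridiag]

lemma tridiag_offdiag_nonneg (N : ℕ) (h : ℕ → ℝ) (hp : ∀ j ≤ N, 0 < h j)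
    (i p : Fin N) (hne : (i : ℕ) ≠ (p : ℕ)) : 0 ≤ tridiag N h i p := by
  have hi : 0 < h i := hp i (le_of_lt i.2)
  have hi1 : 0 < h ((i : ℕ) + 1) := hp _ i.2
  simp only [tridiag, Matrix.of_apply]
  split_ifs <;> first | omega | positivity

lemma tridiag_row_sum (N : ℕ) (h : ℕ → ℝ) (hp : ∀ j ≤ N, 0 < h j) (i : Fin N) :
    ∑ p, tridiag N h i p ≤ 0 := by
  have hi : 0 < h i := hp i (le_of_lt i.2)
  have hi1 : 0 < h ((i : ℕ) + 1) := hp _ i.2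
  set d := -2 / (h i * h ((i : ℕ) + 1)) with hd
  set l := 2 / (h i * (h i + h ((i : ℕ) + 1))) with hl
  set u := 2 / (h ((i : ℕ) + 1) * (h i + h ((i : ℕ) + 1))) with hu
  have hl0 : 0 ≤ l := by positivity
  have hu0 : 0 ≤ u := by positivity
  have hdlu : d + l + u = 0 := by
    rw [hd, hl, hu]
    have hh1 : h (i : ℕ) ≠ 0 := ne_of_gt hi
    have hh2 : h ((i : ℕ) + 1) ≠ 0 := ne_of_gt hi1
    have hh3 : h (i : ℕ) + h ((i : ℕ) + 1) ≠ 0 := by positivity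
    field_simp
    ring
  have hsplit : ∀ p : Fin N, tridiag N h i p =
      (if (p : ℕ) = (i : ℕ) then d else 0) +
      ((if (i : ℕ) = (p : ℕ) + 1 then l else 0) + (if (p : ℕ) = (i : ℕ) + 1 then u else 0)) := by
    intro p
    simp only [tridiag, Matrix.of_apply, hd, hl, hu]
    split_ifs <;> first | ring1 | (exfalso; omega)
  have S1 : (∑ p : Fin N, if (p : ℕ) = (i : ℕ) then d else 0) = d :=
    sum_ite_nat_eq _ i.2 d
  have S2 : (∑ p : Fin N, if (i : ℕ) = (p : ℕ) + 1 then l else 0) ≤ l := by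
    refine le_trans (Finset.sum_le_sum (g := fun p : Fin N =>
      if (p : ℕ) = (i : ℕ) - 1 then l else 0) ?_) (sum_ite_nat_le _ l hl0)
    intro p _
    split_ifs <;> first | exact le_rfl | (exfalso; omega) | exact hl0
  have S3 : (∑ p : Fin N, if (p : ℕ) = (i : ℕ) + 1 then u else 0) ≤ u :=
    sum_ite_nat_le _ u hu0
  calc ∑ p, tridiag N h i p
      = (∑ p : Fin N, if (p : ℕ) = (i : ℕ) then d else 0) +
        ((∑ p : Fin N, if (i : ℕ) = (p : ℕ) + 1 then l else 0) +
         (∑ p : Fin N, if (p : ℕ) = (i : ℕ) + 1 then u else 0)) := by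
        simp only [hsplit, Finset.sum_add_distrib]
    _ ≤ d + (l + u) := by rw [S1]; gcongr
    _ = 0 := by linarith

lemma mul_chain_nonpos {x y z w : ℝ} (hx : 0 ≤ x) (hy : 0 ≤ y) (hz : 0 ≤ z) (hw : w ≤ 0) :
    x * (y * (z * w)) ≤ 0 := by
  calc x * (y * (z * w)) = (x * y * z) * w := by ring
    _ ≤ 0 := mul_nonpos_of_nonneg_of_nonpos (by positivity) hw

lemma half_bound {τ aa φp hh hh' : ℝ} (haa : 0 < aa) (hφp : 0 < φp)
    (hh0 : 0 < hh) (hh'0 : 0 < hh')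
    (key : 2 * τ < aa * (hh * hh' * φp)) :
    -(1/2 : ℝ) < τ / 2 * (aa⁻¹ * (φp⁻¹ * (-2 / (hh * hh')))) := by
  have he : τ / 2 * (aa⁻¹ * (φp⁻¹ * (-2 / (hh * hh')))) = -(τ / (aa * (hh * hh' * φp))) := by
    field_simp
  rw [he, neg_lt_neg_iff, div_lt_iff₀ (by positivity)]
  linarith

lemma phiVec_lower {N1 N2 N3 : ℕ} (a b c q : ℝ) (hq0 : 0 ≤ q)
    (h1 h2 h3 : ℕ → ℝ)
    (hpos1 : ∀ j ≤ N1, 0 < h1 j) (hpos2 : ∀ j ≤ N2, 0 < h2 j) (hpos3 : ∀ j ≤ N3, 0 < h3 j)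
    (p : Idx N1 N2 N3) :
    (a ^ 2 * h1 0 ^ 2 + b ^ 2 * h2 0 ^ 2 + c ^ 2 * h3 0 ^ 2) ^ (q / 2) ≤
      phiVec N1 N2 N3 a b c q h1 h2 h3 p := by
  have h10 : 0 < h1 0 := hpos1 0 (by omega)
  have h20 : 0 < h2 0 := hpos2 0 (by omega)
  have h30 : 0 < h3 0 := hpos3 0 (by omega)
  have hS1 : h1 0 ≤ ∑ ℓ ∈ Finset.range ((p.2.2 : ℕ) + 1), h1 ℓ := by
    apply Finset.single_le_sum (f := h1)
    · intro ℓ hℓ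
      exact (hpos1 ℓ (by have := Finset.mem_range.1 hℓ; have := p.2.2.2; omega)).le
    · exact Finset.mem_range.2 (Nat.succ_pos _)
  have hS2 : h2 0 ≤ ∑ ℓ ∈ Finset.range ((p.2.1 : ℕ) + 1), h2 ℓ := by
    apply Finset.single_le_sum (f := h2)
    · intro ℓ hℓ
      exact (hpos2 ℓ (by have := Finset.mem_range.1 hℓ; have := p.2.1.2; omega)).le
    · exact Finset.mem_range.2 (Nat.succ_pos _)
  have hS3 : h3 0 ≤ ∑ ℓ ∈ Finset.range ((p.1 : ℕ) + 1), h3 ℓ := by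
    apply Finset.single_le_sum (f := h3)
    · intro ℓ hℓ
      exact (hpos3 ℓ (by have := Finset.mem_range.1 hℓ; have := p.1.2; omega)).le
    · exact Finset.mem_range.2 (Nat.succ_pos _)
  unfold phiVec phi
  apply Real.rpow_le_rpow (by positivity) _ (by linarith)
  gcongr

set_option maxHeartbeats 2000000 in
/-- under the CFL condition, `I + (τ/2)Mσ` is nonsingular and
entrywise nonnegative, for `σ = 1,2,3`. -/
theorem statement2 (n1 n2 n3 : ℕ) (a b c q : ℝ)
    (ha : 0 < a) (hb : 0 < b) (hc : 0 < c) (hq0 : 0 ≤ q) (hq2 : q ≤ 2)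
    (h1 h2 h3 : ℕ → ℝ)
    (hpos1 : ∀ j ≤ n1 + 2, 0 < h1 j)
    (hpos2 : ∀ j ≤ n2 + 2, 0 < h2 j)
    (hpos3 : ∀ j ≤ n3 + 2, 0 < h3 j)
    (τ : ℝ) (hτ : 0 < τ) (hCFL : CFL (n1 + 2) (n2 + 2) (n3 + 2) a b c q h1 h2 h3 τ) :
    ∀ σ : Fin 3,
      IsUnit (1 + (τ / 2) • Mmat (n1 + 2) (n2 + 2) (n3 + 2) a b c q h1 h2 h3 σ) ∧
      ∀ p r, 0 ≤ (1 + (τ / 2) • Mmat (n1 + 2) (n2 + 2) (n3 + 2) a b c q h1 h2 h3 σ) p r := by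
  have h10 : 0 < h1 0 := hpos1 0 (by omega)
  have h20 : 0 < h2 0 := hpos2 0 (by omega)
  have h30 : 0 < h3 0 := hpos3 0 (by omega)
  set φ0 : ℝ := (a ^ 2 * h1 0 ^ 2 + b ^ 2 * h2 0 ^ 2 + c ^ 2 * h3 0 ^ 2) ^ (q / 2) with hφ0def
  have hφ0 : 0 < φ0 := Real.rpow_pos_of_pos (by positivity) _
  have hφ : ∀ p : Idx (n1 + 2) (n2 + 2) (n3 + 2),
      φ0 ≤ phiVec (n1 + 2) (n2 + 2) (n3 + 2) a b c q h1 h2 h3 p :=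
    fun p => phiVec_lower a b c q hq0 h1 h2 h3 hpos1 hpos2 hpos3 p
  have hφpos : ∀ p, 0 < phiVec (n1 + 2) (n2 + 2) (n3 + 2) a b c q h1 h2 h3 p :=
    fun p => lt_of_lt_of_le hφ0 (hφ p)
  set hm : ℝ := meshMin (n1 + 2) (n2 + 2) (n3 + 2) h1 h2 h3 with hmdef
  have hm1 : ∀ j ≤ n1 + 2, hm ≤ h1 j := by
    intro j hj
    exact le_trans (min_le_left _ _) (Finset.inf'_le _ (Finset.mem_range.2 (by omega)))
  have hm2 : ∀ j ≤ n2 + 2, hm ≤ h2 j := by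
    intro j hj
    exact le_trans (le_trans (min_le_right _ _) (min_le_left _ _))
      (Finset.inf'_le _ (Finset.mem_range.2 (by omega)))
  have hm3 : ∀ j ≤ n3 + 2, hm ≤ h3 j := by
    intro j hj
    exact le_trans (le_trans (min_le_right _ _) (min_le_right _ _))
      (Finset.inf'_le _ (Finset.mem_range.2 (by omega)))
  have hmpos : 0 < hm := by
    refine lt_min ?_ (lt_min ?_ ?_) <;>
      refine (Finset.lt_inf'_iff _).2 (fun j hj => ?_)
    · exact hpos1 j (by have := Finset.mem_range.1 hj; omega)
    · exact hpos2 j (by have := Finset.mem_range.1 hj; omega)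
    · exact hpos3 j (by have := Finset.mem_range.1 hj; omega)
  have hβdef : betaMin (n1 + 2) (n2 + 2) (n3 + 2) a b c q h1 h2 h3 = hm ^ 2 / 2 * φ0 := rfl
  have hβ : 0 < betaMin (n1 + 2) (n2 + 2) (n3 + 2) a b c q h1 h2 h3 := by
    rw [hβdef]; positivity
  have hτm : τ < min (a ^ 2) (min (b ^ 2) (c ^ 2)) * (hm ^ 2 / 2 * φ0) := by
    rw [← hβdef]; exact (div_lt_iff₀ hβ).1 hCFL
  have hτa : 2 * τ < a ^ 2 * (hm ^ 2 * φ0) := by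
    have hle : min (a ^ 2) (min (b ^ 2) (c ^ 2)) * (hm ^ 2 / 2 * φ0) ≤
        a ^ 2 * (hm ^ 2 / 2 * φ0) := by
      apply mul_le_mul_of_nonneg_right (min_le_left _ _) (by positivity)
    nlinarith
  have hτb : 2 * τ < b ^ 2 * (hm ^ 2 * φ0) := by
    have hle : min (a ^ 2) (min (b ^ 2) (c ^ 2)) * (hm ^ 2 / 2 * φ0) ≤
        b ^ 2 * (hm ^ 2 / 2 * φ0) := by
      apply mul_le_mul_of_nonneg_right (le_trans (min_le_right _ _) (min_le_left _ _))
        (by positivity)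
    nlinarith
  have hτc : 2 * τ < c ^ 2 * (hm ^ 2 * φ0) := by
    have hle : min (a ^ 2) (min (b ^ 2) (c ^ 2)) * (hm ^ 2 / 2 * φ0) ≤
        c ^ 2 * (hm ^ 2 / 2 * φ0) := by
      apply mul_le_mul_of_nonneg_right (le_trans (min_le_right _ _) (min_le_right _ _))
        (by positivity)
    nlinarith
  -- key mesh-product bound
  have hkey : ∀ (aa : ℝ) (hh hh' : ℝ) (φp : ℝ), 2 * τ < aa * (hm ^ 2 * φ0) →
      hm ≤ hh → hm ≤ hh' → φ0 ≤ φp → 0 ≤ aa →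
      2 * τ < aa * (hh * hh' * φp) := by
    intro aa hh hh' φp htt k1 k2 kφ haa
    have A1 : hm ^ 2 ≤ hh * hh' := by nlinarith
    have A2 : hm ^ 2 * φ0 ≤ hh * hh' * φp :=
      mul_le_mul A1 kφ hφ0.le (by nlinarith)
    have A3 : aa * (hm ^ 2 * φ0) ≤ aa * (hh * hh' * φp) :=
      mul_le_mul_of_nonneg_left A2 haa
    linarith
  have hone2 : ∀ x y : Fin (n2 + 2), (0 : ℝ) ≤ (1 : Matrix (Fin (n2 + 2)) (Fin (n2 + 2)) ℝ) x y := by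
    intro x y; rw [Matrix.one_apply]; split_ifs <;> norm_num
  have hone3 : ∀ x y : Fin (n3 + 2), (0 : ℝ) ≤ (1 : Matrix (Fin (n3 + 2)) (Fin (n3 + 2)) ℝ) x y := by
    intro x y; rw [Matrix.one_apply]; split_ifs <;> norm_num
  have hone1 : ∀ x y : Fin (n1 + 2), (0 : ℝ) ≤ (1 : Matrix (Fin (n1 + 2)) (Fin (n1 + 2)) ℝ) x y := by
    intro x y; rw [Matrix.one_apply]; split_ifs <;> norm_num
  have honeP : ∀ x y : Fin (n2 + 2) × Fin (n1 + 2),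
      (0 : ℝ) ≤ (1 : Matrix (Fin (n2 + 2) × Fin (n1 + 2)) (Fin (n2 + 2) × Fin (n1 + 2)) ℝ) x y := by
    intro x y; rw [Matrix.one_apply]; split_ifs <;> norm_num
  intro σ
  fin_cases σ
  · -- σ = 0
    have hE : ∀ p r : Idx (n1 + 2) (n2 + 2) (n3 + 2),
        Mmat (n1 + 2) (n2 + 2) (n3 + 2) a b c q h1 h2 h3 0 p r =
        (a ^ 2)⁻¹ * ((phiVec (n1 + 2) (n2 + 2) (n3 + 2) a b c q h1 h2 h3 p)⁻¹ *
          ((1 : Matrix (Fin (n3 + 2)) (Fin (n3 + 2)) ℝ) p.1 r.1 *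
            ((1 : Matrix (Fin (n2 + 2)) (Fin (n2 + 2)) ℝ) p.2.1 r.2.1 *
              tridiag (n1 + 2) h1 p.2.2 r.2.2))) := by
      intro p r
      simp [Mmat, Bdiag, Matrix.smul_apply, Matrix.diagonal_mul, Matrix.kroneckerMap_apply]
    show IsUnit (1 + (τ / 2) • Mmat (n1 + 2) (n2 + 2) (n3 + 2) a b c q h1 h2 h3 0) ∧
        ∀ p r, 0 ≤ (1 + (τ / 2) • Mmat (n1 + 2) (n2 + 2) (n3 + 2) a b c q h1 h2 h3 0) p r
    apply aux_unit_nonneg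
    · intro p r hpr
      rw [Matrix.smul_apply, hE, smul_eq_mul]
      by_cases e3 : p.1 = r.1
      · by_cases e2 : p.2.1 = r.2.1
        · have e1 : p.2.2 ≠ r.2.2 := by
            intro e1; exact hpr (Prod.ext e3 (Prod.ext e2 e1))
          have e1' : (p.2.2 : ℕ) ≠ (r.2.2 : ℕ) := fun hv => e1 (Fin.val_injective hv)
          have hT := tridiag_offdiag_nonneg (n1 + 2) h1 hpos1 p.2.2 r.2.2 e1'
          have g3 := hone3 p.1 r.1
          have g2 := hone2 p.2.1 r.2.1
          have := hφpos p
          positivity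
        · simp [Matrix.one_apply_ne e2]
      · simp [Matrix.one_apply_ne e3]
    · intro p
      have hs : (∑ r : Idx (n1 + 2) (n2 + 2) (n3 + 2),
          ((1 : Matrix (Fin (n3 + 2)) (Fin (n3 + 2)) ℝ) p.1 r.1 *
            ((1 : Matrix (Fin (n2 + 2)) (Fin (n2 + 2)) ℝ) p.2.1 r.2.1 *
              tridiag (n1 + 2) h1 p.2.2 r.2.2))) =
          ∑ i' : Fin (n1 + 2), tridiag (n1 + 2) h1 p.2.2 i' := by
        simp [Fintype.sum_prod_type, Matrix.one_apply, ite_mul, zero_mul, Finset.sum_ite_eq]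
      calc ∑ r, ((τ / 2) • Mmat (n1 + 2) (n2 + 2) (n3 + 2) a b c q h1 h2 h3 0) p r
          = τ / 2 * ((a ^ 2)⁻¹ * ((phiVec (n1 + 2) (n2 + 2) (n3 + 2) a b c q h1 h2 h3 p)⁻¹ *
              ∑ i' : Fin (n1 + 2), tridiag (n1 + 2) h1 p.2.2 i')) := by
            simp only [Matrix.smul_apply, hE, smul_eq_mul, ← Finset.mul_sum, hs]
        _ ≤ 0 := mul_chain_nonpos (by linarith) (by positivity)
            (inv_nonneg.mpr (hφpos p).le) (tridiag_row_sum _ _ hpos1 _)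
    · intro p
      rw [Matrix.smul_apply, hE, smul_eq_mul, Matrix.one_apply_eq, Matrix.one_apply_eq,
        one_mul, one_mul, tridiag_diag]
      apply half_bound (by positivity) (hφpos p)
        (hpos1 _ (le_of_lt p.2.2.2)) (hpos1 _ p.2.2.2)
      exact hkey _ _ _ _ hτa (hm1 _ (le_of_lt p.2.2.2)) (hm1 _ p.2.2.2) (hφ p) (by positivity)
  · -- σ = 1
    have hE : ∀ p r : Idx (n1 + 2) (n2 + 2) (n3 + 2),
        Mmat (n1 + 2) (n2 + 2) (n3 + 2) a b c q h1 h2 h3 1 p r =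
        (b ^ 2)⁻¹ * ((phiVec (n1 + 2) (n2 + 2) (n3 + 2) a b c q h1 h2 h3 p)⁻¹ *
          ((1 : Matrix (Fin (n3 + 2)) (Fin (n3 + 2)) ℝ) p.1 r.1 *
            (tridiag (n2 + 2) h2 p.2.1 r.2.1 *
              (1 : Matrix (Fin (n1 + 2)) (Fin (n1 + 2)) ℝ) p.2.2 r.2.2))) := by
      intro p r
      simp [Mmat, Bdiag, Matrix.smul_apply, Matrix.diagonal_mul, Matrix.kroneckerMap_apply]
    show IsUnit (1 + (τ / 2) • Mmat (n1 + 2) (n2 + 2) (n3 + 2) a b c q h1 h2 h3 1) ∧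
        ∀ p r, 0 ≤ (1 + (τ / 2) • Mmat (n1 + 2) (n2 + 2) (n3 + 2) a b c q h1 h2 h3 1) p r
    apply aux_unit_nonneg
    · intro p r hpr
      rw [Matrix.smul_apply, hE, smul_eq_mul]
      by_cases e3 : p.1 = r.1
      · by_cases e1 : p.2.2 = r.2.2
        · have e2 : p.2.1 ≠ r.2.1 := by
            intro e2; exact hpr (Prod.ext e3 (Prod.ext e2 e1))
          have e2' : (p.2.1 : ℕ) ≠ (r.2.1 : ℕ) := fun hv => e2 (Fin.val_injective hv)
          have hT := tridiag_offdiag_nonneg (n2 + 2) h2 hpos2 p.2.1 r.2.1 e2'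
          have g3 := hone3 p.1 r.1
          have h1' := hone1 p.2.2 r.2.2
          have := hφpos p
          positivity
        · simp [Matrix.one_apply_ne e1]
      · simp [Matrix.one_apply_ne e3]
    · intro p
      have hs : (∑ r : Idx (n1 + 2) (n2 + 2) (n3 + 2),
          ((1 : Matrix (Fin (n3 + 2)) (Fin (n3 + 2)) ℝ) p.1 r.1 *
            (tridiag (n2 + 2) h2 p.2.1 r.2.1 *
              (1 : Matrix (Fin (n1 + 2)) (Fin (n1 + 2)) ℝ) p.2.2 r.2.2))) =
          ∑ j' : Fin (n2 + 2), tridiag (n2 + 2) h2 p.2.1 j' := by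
        simp [Fintype.sum_prod_type, Matrix.one_apply, ite_mul, mul_ite, zero_mul, mul_zero,
          Finset.sum_ite_eq]
      calc ∑ r, ((τ / 2) • Mmat (n1 + 2) (n2 + 2) (n3 + 2) a b c q h1 h2 h3 1) p r
          = τ / 2 * ((b ^ 2)⁻¹ * ((phiVec (n1 + 2) (n2 + 2) (n3 + 2) a b c q h1 h2 h3 p)⁻¹ *
              ∑ j' : Fin (n2 + 2), tridiag (n2 + 2) h2 p.2.1 j')) := by
            simp only [Matrix.smul_apply, hE, smul_eq_mul, ← Finset.mul_sum, hs]
        _ ≤ 0 := mul_chain_nonpos (by linarith) (by positivity)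
            (inv_nonneg.mpr (hφpos p).le) (tridiag_row_sum _ _ hpos2 _)
    · intro p
      rw [Matrix.smul_apply, hE, smul_eq_mul, Matrix.one_apply_eq, Matrix.one_apply_eq,
        one_mul, mul_one, tridiag_diag]
      apply half_bound (by positivity) (hφpos p)
        (hpos2 _ (le_of_lt p.2.1.2)) (hpos2 _ p.2.1.2)
      exact hkey _ _ _ _ hτb (hm2 _ (le_of_lt p.2.1.2)) (hm2 _ p.2.1.2) (hφ p) (by positivity)
  · -- σ = 2
    have hE : ∀ p r : Idx (n1 + 2) (n2 + 2) (n3 + 2),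
        Mmat (n1 + 2) (n2 + 2) (n3 + 2) a b c q h1 h2 h3 2 p r =
        (c ^ 2)⁻¹ * ((phiVec (n1 + 2) (n2 + 2) (n3 + 2) a b c q h1 h2 h3 p)⁻¹ *
          (tridiag (n3 + 2) h3 p.1 r.1 *
            (1 : Matrix (Fin (n2 + 2) × Fin (n1 + 2)) (Fin (n2 + 2) × Fin (n1 + 2)) ℝ) p.2 r.2)) := by
      intro p r
      simp [Mmat, Bdiag, Matrix.smul_apply, Matrix.diagonal_mul, Matrix.kroneckerMap_apply]
    show IsUnit (1 + (τ / 2) • Mmat (n1 + 2) (n2 + 2) (n3 + 2) a b c q h1 h2 h3 2) ∧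
        ∀ p r, 0 ≤ (1 + (τ / 2) • Mmat (n1 + 2) (n2 + 2) (n3 + 2) a b c q h1 h2 h3 2) p r
    apply aux_unit_nonneg
    · intro p r hpr
      rw [Matrix.smul_apply, hE, smul_eq_mul]
      by_cases e2 : p.2 = r.2
      · have e3 : p.1 ≠ r.1 := by
          intro e3; exact hpr (Prod.ext e3 e2)
        have e3' : (p.1 : ℕ) ≠ (r.1 : ℕ) := fun hv => e3 (Fin.val_injective hv)
        have hT := tridiag_offdiag_nonneg (n3 + 2) h3 hpos3 p.1 r.1 e3'
        have h1' := honeP p.2 r.2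
        have := hφpos p
        positivity
      · simp [Matrix.one_apply_ne e2]
    · intro p
      have hs : (∑ r : Idx (n1 + 2) (n2 + 2) (n3 + 2),
          (tridiag (n3 + 2) h3 p.1 r.1 *
            (1 : Matrix (Fin (n2 + 2) × Fin (n1 + 2)) (Fin (n2 + 2) × Fin (n1 + 2)) ℝ) p.2 r.2)) =
          ∑ k' : Fin (n3 + 2), tridiag (n3 + 2) h3 p.1 k' := by
        simp [Fintype.sum_prod_type, Matrix.one_apply, ite_mul, mul_ite, zero_mul, mul_zero,
          Finset.sum_ite_eq]
      calc ∑ r, ((τ / 2) • Mmat (n1 + 2) (n2 + 2) (n3 + 2) a b c q h1 h2 h3 2) p r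
          = τ / 2 * ((c ^ 2)⁻¹ * ((phiVec (n1 + 2) (n2 + 2) (n3 + 2) a b c q h1 h2 h3 p)⁻¹ *
              ∑ k' : Fin (n3 + 2), tridiag (n3 + 2) h3 p.1 k')) := by
            simp only [Matrix.smul_apply, hE, smul_eq_mul, ← Finset.mul_sum, hs]
        _ ≤ 0 := mul_chain_nonpos (by linarith) (by positivity)
            (inv_nonneg.mpr (hφpos p).le) (tridiag_row_sum _ _ hpos3 _)
    · intro p
      rw [Matrix.smul_apply, hE, smul_eq_mul, Matrix.one_apply_eq, mul_one, tridiag_diag]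
      apply half_bound (by positivity) (hφpos p)
        (hpos3 _ (le_of_lt p.1.2)) (hpos3 _ p.1.2)
      exact hkey _ _ _ _ hτc (hm3 _ (le_of_lt p.1.2)) (hm3 _ p.1.2) (hφ p) (by positivity)

end Kawarada
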